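/- Let γ > 0 and c > 0. Define f : (−c, ∞) → ℝ by f(t) = c^{−γ} − (t + c)^{−γ}, and F : (−c, ∞) → ℝ by F(t) = ∫_0^t f(r) dr. Then for every real s ≥ 1 and every t ≥ 0, F(s·t) ≤ s² F(t). -/

import Mathlib

open Set Real

lemma convexOn_rpow_neg {γ : ℝ} (hγ : 0 < γ) :
    ConvexOn ℝ (Set.Ioi (0 : ℝ)) (fun x : ℝ => x ^ (-γ)) := by
  refine convexOn_of_hasDerivWithinAt2_nonneg (convex_Ioi 0)
    (f' := fun x => -γ * x ^ (-γ - 1)) (f'' := fun x => -γ * ((-γ - 1) * x ^ (-γ - 1 - 1)))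
    ?_ ?_ ?_ ?_
  · exact fun x hx => (Real.continuousAt_rpow_const x (-γ) (Or.inl (ne_of_gt hx))).continuousWithinAt
  · intro x hx
    rw [interior_Ioi] at hx
    exact (Real.hasDerivAt_rpow_const (Or.inl (ne_of_gt hx))).hasDerivWithinAt
  · intro x hx
    rw [interior_Ioi] at hx
    exact ((Real.hasDerivAt_rpow_const (p := -γ - 1) (Or.inl (ne_of_gt hx))).const_mul
      (-γ)).hasDerivWithinAt
  · intro x hx
    rw [interior_Ioi] at hx
    have hp : (0:ℝ) ≤ x ^ (-γ - 1 - 1) := Real.rpow_nonneg hx.le _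
    show (0:ℝ) ≤ -γ * ((-γ - 1) * x ^ (-γ - 1 - 1))
    have : -γ * ((-γ - 1) * x ^ (-γ - 1 - 1)) = γ * (γ + 1) * x ^ (-γ - 1 - 1) := by ring
    rw [this]
    positivity

lemma pointwise_key {γ c : ℝ} (hγ : 0 < γ) (hc : 0 < c) {s u : ℝ} (hs : 1 ≤ s) (hu : 0 ≤ u) :
    c ^ (-γ) - (s * u + c) ^ (-γ) ≤ s * (c ^ (-γ) - (u + c) ^ (-γ)) := by
  have hs0 : 0 < s := lt_of_lt_of_le one_pos hs
  have h1 : (0:ℝ) < s * u + c := by positivity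
  have h2 : (0:ℝ) < u + c := by linarith
  have ha : (0:ℝ) ≤ 1 / s := by positivity
  have hb : (0:ℝ) ≤ 1 - 1 / s := by
    rw [sub_nonneg]
    exact div_le_one_of_le₀ hs hs0.le
  have hab : 1 / s + (1 - 1 / s) = (1:ℝ) := by ring
  have hconv := (convexOn_rpow_neg hγ).2 (mem_Ioi.2 h1) (mem_Ioi.2 hc) ha hb hab
  have hsum : (1 / s) • (s * u + c) + (1 - 1 / s) • c = u + c := by
    field_simp
    rw [smul_eq_mul, smul_eq_mul, div_mul_eq_mul_div, div_mul_eq_mul_div, ← add_div, div_eq_iff hs0.ne']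
    ring
  rw [hsum] at hconv
  simp only [smul_eq_mul] at hconv
  have := mul_le_mul_of_nonneg_left hconv hs0.le
  have hne : s ≠ 0 := hs0.ne'
  field_simp at this ⊢
  nlinarith [this]

/-- `F(x, s t) ≤ s² F(x, t)` for the primitive of the translated singular nonlinearity. -/
theorem statement6 (γ c : ℝ) (hγ : 0 < γ) (hc : 0 < c) :
    ∀ s t : ℝ, 1 ≤ s → 0 ≤ t →
      (∫ r in (0 : ℝ)..(s * t), (c ^ (-γ) - (r + c) ^ (-γ))) ≤
        s ^ 2 * ∫ r in (0 : ℝ)..t, (c ^ (-γ) - (r + c) ^ (-γ)) := by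
  intro s t hs ht
  have hs0 : 0 < s := lt_of_lt_of_le one_pos hs
  have hsub : (∫ r in (0 : ℝ)..(s * t), (c ^ (-γ) - (r + c) ^ (-γ)))
      = s * ∫ u in (0 : ℝ)..t, (c ^ (-γ) - (s * u + c) ^ (-γ)) := by
    have h := intervalIntegral.smul_integral_comp_mul_left
      (fun r : ℝ => c ^ (-γ) - (r + c) ^ (-γ)) (a := 0) (b := t) s
    simp only [smul_eq_mul, mul_zero] at h
    exact h.symm
  rw [hsub, pow_two, mul_assoc]
  refine mul_le_mul_of_nonneg_left ?_ hs0.le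
  have cont : ∀ a : ℝ, 0 < a → ContinuousOn (fun u : ℝ => c ^ (-γ) - (a * u + c) ^ (-γ))
      (Icc 0 t) := by
    intro a ha
    refine continuousOn_const.sub (ContinuousOn.rpow_const ?_ ?_)
    · exact ((continuousOn_const.mul continuousOn_id).add continuousOn_const)
    · intro x hx
      left
      have : 0 < a * x + c := by nlinarith [hx.1]
      exact this.ne'
  have int1 : IntervalIntegrable (fun u : ℝ => c ^ (-γ) - (s * u + c) ^ (-γ)) MeasureTheory.volume 0 t := by
    apply ContinuousOn.intervalIntegrable
    rw [uIcc_of_le ht]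
    exact cont s hs0
  have int2 : IntervalIntegrable (fun u : ℝ => s * (c ^ (-γ) - (u + c) ^ (-γ))) MeasureTheory.volume 0 t := by
    apply ContinuousOn.intervalIntegrable
    rw [uIcc_of_le ht]
    exact (continuousOn_const.mul ((cont 1 one_pos).congr (by intro x _; simp)))
  calc (∫ u in (0 : ℝ)..t, (c ^ (-γ) - (s * u + c) ^ (-γ)))
      ≤ ∫ u in (0 : ℝ)..t, s * (c ^ (-γ) - (u + c) ^ (-γ)) := by
        refine intervalIntegral.integral_mono_on ht int1 int2 ?_
        intro u hu
        exact pointwise_key hγ hc hs hu.1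
    _ = s * ∫ u in (0 : ℝ)..t, (c ^ (-γ) - (u + c) ^ (-γ)) := by
        rw [intervalIntegral.integral_const_mul]
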